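/- Let q = 2^n with n even, and a ∈ F_{q^3}^*. If a^{q^2+q+1} = 1 and a^{(q^2+q+1)/3} ≠ 1, then the map x ↦ x^{(q^2+q)/2} + a·x is a bijection of F_{q^3}. -/

import Mathlib

theorem stmt5 (n : ℕ) (hn : Even n) (h0 : 0 < n)
    (F : Type*) [Field F] [Fintype F] (hF : Fintype.card F = (2 ^ n) ^ 3)
    (a : F) (ha : a ≠ 0)
    (h1 : a ^ ((2 ^ n) ^ 2 + 2 ^ n + 1) = 1)
    (h2 : a ^ (((2 ^ n) ^ 2 + 2 ^ n + 1) / 3) ≠ 1) :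
    Function.Bijective (fun x : F => x ^ (((2 ^ n) ^ 2 + 2 ^ n) / 2) + a * x) := by
  set q : ℕ := 2 ^ n with hqdef
  -- characteristic 2
  haveI : CharP F (ringChar F) := ringChar.charP F
  have hprime : (ringChar F).Prime := CharP.char_is_prime F (ringChar F)
  have hdvd : ringChar F ∣ 2 ^ (n * 3) := by
    have hcast := FiniteField.cast_card_eq_zero F
    have h := (CharP.cast_eq_zero_iff F (ringChar F) (Fintype.card F)).mp hcast
    rwa [hF, hqdef, ← pow_mul] at h
  have hp2 : ringChar F = 2 :=
    (Nat.prime_dvd_prime_iff_eq hprime Nat.prime_two).mp (hprime.dvd_of_dvd_pow hdvd)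
  haveI hchar : CharP F 2 := hp2 ▸ ringChar.charP F
  haveI : Fact (Nat.Prime 2) := ⟨Nat.prime_two⟩
  have htwo : (2 : F) = 0 := by
    have := CharP.cast_eq_zero F 2
    exact_mod_cast this
  have hfrob : ∀ u v : F, (u + v) ^ q = u ^ q + v ^ q := by
    intro u v; rw [hqdef]; exact add_pow_char_pow u v 2 n
  have hpc : ∀ c : F, c ^ (q ^ 3) = c := by
    intro c
    have h := FiniteField.pow_card c
    rwa [hF] at h
  have hiter : ∀ c : F, c ^ (q ^ 2) = (c ^ q) ^ q := by
    intro c; rw [show q ^ 2 = q * q from by ring, pow_mul]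
  have hq3iter : ∀ c : F, ((c ^ q) ^ q) ^ q = c := by
    intro c
    rw [← pow_mul, ← pow_mul, show q * (q * q) = q ^ 3 from by ring, hpc]
  -- arithmetic on exponents
  have hqmod : q % 3 = 1 := by
    obtain ⟨m, hm⟩ := hn
    have h4 : q = 4 ^ m := by
      rw [hqdef, hm, ← two_mul, pow_mul]; norm_num
    rw [h4, Nat.pow_mod]; norm_num
  obtain ⟨r, hr⟩ : ∃ r, q = 3 * r + 1 := ⟨q / 3, by omega⟩
  obtain ⟨D, hDdef⟩ : ∃ D, D = 3 * (r * r + r) + 1 := ⟨_, rfl⟩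
  obtain ⟨k, hkdef⟩ : ∃ k, k = 2 * (r * r + r) + 1 := ⟨_, rfl⟩
  have h3D : q ^ 2 + q + 1 = 3 * D := by rw [hDdef, hr]; ring
  have hDdiv : (q ^ 2 + q + 1) / 3 = D := by
    rw [h3D]; exact Nat.mul_div_cancel_left D (by norm_num)
  have h2dvd : 2 ∣ q ^ 2 + q := by
    have h2q : (2 : ℕ) ∣ q := dvd_pow_self 2 h0.ne'
    obtain ⟨c, hc⟩ := h2q
    exact ⟨c * q + c, by rw [hc]; ring⟩
  have hE2mul : (q ^ 2 + q) / 2 * 2 = q ^ 2 + q := Nat.div_mul_cancel h2dvd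
  -- lemmas about F_q elements
  have hFq1 : ∀ c : F, c ≠ 0 → c ^ q = c → c ^ (3 * r) = 1 := by
    intro c hc hcq
    have h1c : c ^ (3 * r) * c = c := by rw [← pow_succ, ← hr]; exact hcq
    exact mul_right_cancel₀ hc (by rw [h1c, one_mul])
  have hFqD : ∀ c : F, c ≠ 0 → c ^ q = c → c ^ D = c := by
    intro c hc hcq
    have h31 := hFq1 c hc hcq
    rw [hDdef, show 3 * (r * r + r) + 1 = 3 * r * (r + 1) + 1 from by ring,
      pow_succ, pow_mul, h31, one_pow, one_mul]
  have hFq3 : ∀ c : F, c ^ q = c → c ^ (q ^ 2 + q + 1) = c ^ 3 := by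
    intro c hcq
    rw [pow_add, pow_add, hiter, hcq, hcq, pow_one]; ring
  have h1' : a ^ (3 * D) = 1 := by rw [← h3D]; exact h1
  rw [hDdiv] at h2
  -- main part: injectivity
  have hinj : Function.Injective (fun x : F => x ^ ((q ^ 2 + q) / 2) + a * x) := by
    intro x y hxy
    by_contra hne
    dsimp only at hxy
    have hs : x + y ≠ 0 := fun h => hne (by linear_combination h - y * htwo)
    obtain ⟨s, hsdef⟩ : ∃ s : F, s = x + y := ⟨_, rfl⟩
    have hs0 : s ≠ 0 := by rw [hsdef]; exact hs
    obtain ⟨z, hzdef⟩ : ∃ z : F, z = y * s⁻¹ := ⟨_, rfl⟩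
    have hyz : y = z * s := by rw [hzdef]; exact (inv_mul_cancel_right₀ hs0 y).symm
    have hxz : x = (1 + z) * s := by linear_combination - hsdef - hyz - z * s * htwo
    -- squaring the equation
    have hsq2 : ∀ u v : F, (u + v) ^ 2 = u ^ 2 + v ^ 2 := fun u v => by
      linear_combination u * v * htwo
    have e0 := congrArg (fun w : F => w ^ 2) hxy
    rw [hsq2, hsq2, mul_pow, mul_pow, ← pow_mul x ((q ^ 2 + q) / 2) 2,
      ← pow_mul y ((q ^ 2 + q) / 2) 2, hE2mul] at e0
    -- power expansions
    have hxq : x ^ q = (1 + z ^ q) * s ^ q := by rw [hxz, mul_pow, hfrob, one_pow]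
    have hyq : y ^ q = z ^ q * s ^ q := by rw [hyz, mul_pow]
    have hxq2 : x ^ (q ^ 2) = (1 + z ^ (q ^ 2)) * s ^ (q ^ 2) := by
      rw [hiter x, hxq, mul_pow, hfrob, one_pow, ← hiter, ← hiter]
    have hyq2 : y ^ (q ^ 2) = z ^ (q ^ 2) * s ^ (q ^ 2) := by
      rw [hiter y, hyq, mul_pow, ← hiter, ← hiter]
    have hxqq : x ^ (q ^ 2 + q) = (1 + z ^ (q ^ 2)) * s ^ (q ^ 2) * ((1 + z ^ q) * s ^ q) := by
      rw [pow_add, hxq2, hxq]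
    have hyqq : y ^ (q ^ 2 + q) = z ^ (q ^ 2) * s ^ (q ^ 2) * (z ^ q * s ^ q) := by
      rw [pow_add, hyq2, hyq]
    have e2 : (1 + z ^ q + z ^ (q ^ 2)) * (s ^ (q ^ 2) * s ^ q * s) = a ^ 2 * s ^ 3 := by
      linear_combination s * e0 - s * hxqq + s * hyqq - a ^ 2 * s * (x + (1 + z) * s) * hxz +
        a ^ 2 * s * (y + z * s) * hyz + (-(a ^ 2 * s ^ 3) - z * a ^ 2 * s ^ 3) * htwo
    obtain ⟨u, hudef⟩ : ∃ u : F, u = 1 + z ^ q + z ^ (q ^ 2) := ⟨_, rfl⟩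
    obtain ⟨Ns, hNdef⟩ : ∃ Ns : F, Ns = s ^ (q ^ 2 + q + 1) := ⟨_, rfl⟩
    have hNfact : Ns = s ^ (q ^ 2) * s ^ q * s := by rw [hNdef, pow_add, pow_add, pow_one]
    have e2' : u * Ns = a ^ 2 * s ^ 3 := by rw [hudef, hNfact]; exact e2
    have hNs0 : Ns ≠ 0 := by rw [hNdef]; exact pow_ne_zero _ hs0
    have hNsq : Ns ^ q = Ns := by
      rw [hNdef]
      calc (s ^ (q ^ 2 + q + 1)) ^ q = s ^ (q ^ 3 + (q ^ 2 + q)) := by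
              rw [← pow_mul]; congr 1; ring
        _ = s ^ (q ^ 3) * s ^ (q ^ 2 + q) := pow_add s _ _
        _ = s ^ (q ^ 2 + q) * s := by rw [hpc]; ring
        _ = s ^ (q ^ 2 + q + 1) := by rw [← pow_succ]
    have hNsD : Ns ^ D = Ns := hFqD Ns hNs0 hNsq
    have hu0 : u ≠ 0 := by
      intro h
      rw [h, zero_mul] at e2'
      exact (mul_ne_zero (pow_ne_zero 2 ha) (pow_ne_zero 3 hs0)) e2'.symm
    have hNu : u ^ (3 * D) = 1 := by
      have h5 := congrArg (fun c : F => c ^ (3 * D)) e2'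
      rw [mul_pow, mul_pow] at h5
      have hA : (a ^ 2) ^ (3 * D) = 1 := by
        rw [← pow_mul, mul_comm 2 (3 * D), pow_mul, h1', one_pow]
      have hB : (s ^ 3) ^ (3 * D) = Ns ^ 3 := by
        rw [← pow_mul, mul_comm 3 (3 * D), pow_mul, ← h3D, ← hNdef]
      have hC : Ns ^ (3 * D) = Ns ^ 3 := by rw [← h3D]; exact hFq3 Ns hNsq
      rw [hA, hB, hC, one_mul] at h5
      exact mul_right_cancel₀ (pow_ne_zero 3 hNs0) (by rw [h5, one_mul])
    have htu : u ^ D = a ^ (2 * D) := by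
      have h6 := congrArg (fun c : F => c ^ D) e2'
      rw [mul_pow, mul_pow, hNsD] at h6
      have hsD : (s ^ 3) ^ D = Ns := by rw [← pow_mul, ← h3D, ← hNdef]
      rw [hsD, ← pow_mul] at h6
      exact mul_right_cancel₀ hNs0 h6
    obtain ⟨t, htdef⟩ : ∃ t : F, t = u ^ D := ⟨_, rfl⟩
    have hta : t = a ^ (2 * D) := htdef.trans htu
    have hu1 : t = 1 := by
      by_contra htne
      have ht3 : t ^ 3 = 1 := by rw [htdef, ← pow_mul, mul_comm D 3]; exact hNu
      have htq : t ^ q = t := by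
        rw [hta, ← pow_mul,
          show 2 * D * q = 2 * D + (q ^ 2 + q + 1) * (2 * r) from by rw [hDdef, hr]; ring,
          pow_add, pow_mul a (q ^ 2 + q + 1) (2 * r), h1, one_pow, mul_one]
      have hq_t : t ^ 2 + t + 1 = 0 := by
        have hfac : (t + 1) * (t ^ 2 + t + 1) = 0 := by
          linear_combination ht3 + (t ^ 2 + t + 1) * htwo
        rcases mul_eq_zero.mp hfac with h | h
        · exact absurd (by linear_combination h - htwo) htne
        · exact h
      have ht2q : (t ^ 2) ^ q = t ^ 2 := by rw [← pow_mul, mul_comm 2 q, pow_mul, htq]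
      obtain ⟨v, hvdef⟩ : ∃ v : F, v = u * t ^ 2 := ⟨_, rfl⟩
      have ht2D : t ^ (2 * D) = t ^ 2 := by
        rw [show 2 * D = 3 * (2 * (r * r + r)) + 2 from by rw [hDdef]; ring,
          pow_add, pow_mul, ht3, one_pow, one_mul]
      have hvD : v ^ D = 1 := by
        rw [hvdef, mul_pow, ← htdef, ← pow_mul, ht2D]
        linear_combination ht3
      have huq : u ^ q = 1 + (z ^ q) ^ q + z := by
        rw [hudef, hiter z, hfrob, hfrob, one_pow, hq3iter z]
      have huq2 : (u ^ q) ^ q = 1 + z + z ^ q := by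
        rw [huq, hfrob, hfrob, one_pow, hq3iter z]
      have hTru : u + u ^ q + (u ^ q) ^ q = 1 := by
        rw [huq2, huq, hudef, hiter z]
        linear_combination (1 + z + z ^ q + (z ^ q) ^ q) * htwo
      have hvq : v ^ q = u ^ q * t ^ 2 := by rw [hvdef, mul_pow, ht2q]
      have hvq2 : (v ^ q) ^ q = (u ^ q) ^ q * t ^ 2 := by rw [hvq, mul_pow, ht2q]
      have hTrv : v + v ^ q + (v ^ q) ^ q = t ^ 2 := by
        rw [hvq2, hvq, hvdef]
        linear_combination (t ^ 2) * hTru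
      obtain ⟨w, hwdef⟩ : ∃ w : F, w = v ^ k := ⟨_, rfl⟩
      have hxiv : w ^ 3 = v := by
        rw [hwdef, ← pow_mul, show k * 3 = 2 * D + 1 from by rw [hkdef, hDdef]; ring,
          pow_succ, mul_comm 2 D, pow_mul, hvD, one_pow, one_mul]
      have hxiq3 : ((w ^ q) ^ q) ^ q = w := hq3iter w
      have hprod : w ^ (q ^ 2 + q + 1) = 1 := by
        rw [hwdef, ← pow_mul, show k * (q ^ 2 + q + 1) = D * (3 * k) from by rw [h3D]; ring,
          pow_mul, hvD, one_pow]
      have hprod' : w * w ^ q * (w ^ q) ^ q = 1 := by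
        rw [← hprod, pow_add, pow_add, pow_one, hiter w]; ring
      obtain ⟨T, hTdef⟩ : ∃ T : F, T = w + w ^ q + (w ^ q) ^ q := ⟨_, rfl⟩
      obtain ⟨S, hSdef⟩ : ∃ S : F,
          S = w * w ^ q + w * (w ^ q) ^ q + w ^ q * (w ^ q) ^ q := ⟨_, rfl⟩
      have hTq : T ^ q = T := by rw [hTdef, hfrob, hfrob, hxiq3]; ring
      have hSq : S ^ q = S := by
        rw [hSdef, hfrob, hfrob, mul_pow, mul_pow, mul_pow, hxiq3]; ring
      have hv1q : v ^ q = (w ^ q) ^ 3 := by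
        rw [← hxiv, ← pow_mul, mul_comm 3 q, pow_mul]
      have hv2q : (v ^ q) ^ q = ((w ^ q) ^ q) ^ 3 := by
        rw [hv1q, ← pow_mul, mul_comm 3 q, pow_mul]
      have hp3 : w ^ 3 + (w ^ q) ^ 3 + ((w ^ q) ^ q) ^ 3 = t ^ 2 := by
        rw [hxiv, ← hv1q, ← hv2q]; exact hTrv
      obtain ⟨P, hPdef⟩ : ∃ P : F, P = t ^ 2 * T := ⟨_, rfl⟩
      have hPq : P ^ q = P := by rw [hPdef, mul_pow, ht2q, hTq]
      have hTS : T * S = t ^ 2 + T ^ 3 + 1 := by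
        linear_combination (S - (T ^ 2 + T * (w + w ^ q + (w ^ q) ^ q) +
            (w + w ^ q + (w ^ q) ^ q) ^ 2)) * hTdef +
          (w + w ^ q + (w ^ q) ^ q) * hSdef + hp3 + hprod' +
          (w * w ^ q * (w ^ q) ^ q - (w ^ 3 + (w ^ q) ^ 3 + ((w ^ q) ^ q) ^ 3) -
            (w + w ^ q + (w ^ q) ^ q) *
              (w * w ^ q + w * (w ^ q) ^ q + w ^ q * (w ^ q) ^ q)) * htwo
      have hroot : (P + w) * (P + w ^ q) * (P + (w ^ q) ^ q) = 0 := by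
        linear_combination (P ^ 2 + P * (t ^ 2 * T) + (t ^ 2 * T) ^ 2 + (P + t ^ 2 * T) * T + S) *
            hPdef - P ^ 2 * hTdef - P * hSdef + hprod' + t ^ 2 * hTS +
          ((T ^ 3 * t ^ 2 + 1) * (t ^ 2 - t + 1)) * hq_t
      have hPfix : w = P := by
        rcases mul_eq_zero.mp hroot with h12 | hc
        · rcases mul_eq_zero.mp h12 with hc | hc
          · linear_combination hc - P * htwo
          · have h2' : w ^ q = P := by linear_combination hc - P * htwo
            have h3' : (w ^ q) ^ q = P := by rw [h2']; exact hPq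
            rw [← hxiq3, h3']; exact hPq
        · have h3' : (w ^ q) ^ q = P := by linear_combination hc - P * htwo
          rw [← hxiq3, h3']; exact hPq
      have hfix : w ^ q = w := by rw [hPfix]; exact hPq
      rw [hfix, hfix] at hprod'
      have hv1 : v = 1 := by rw [← hxiv]; linear_combination hprod'
      rw [hv1, one_pow, one_pow] at hTrv
      have ht0 : t = 0 := by linear_combination hq_t + hTrv - 2 * htwo
      rw [ht0, zero_pow (by norm_num : (3 : ℕ) ≠ 0)] at ht3
      exact zero_ne_one ht3
    have ha2D : a ^ (2 * D) = 1 := by rw [← hta]; exact hu1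
    have haD : a ^ D = 1 := by
      have h23 : a ^ (3 * D) = a ^ (2 * D) * a ^ D := by
        rw [← pow_add]; congr 1; ring
      rw [h23, ha2D, one_mul] at h1'
      exact h1'
    exact h2 haD
  exact Finite.injective_iff_bijective.mp hinj
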